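/- Let n ≥ 3 and let p(z) = z^n − z, whose zeros are z_1 = 0 and z_j = e^{2πi(j−2)/(n−1)} for 2 ≤ j ≤ n, and whose critical points are w_i = (1/n)^{1/(n−1)} e^{2πi(i−1)/(n−1)} for 1 ≤ i ≤ n−1. Define the (n−1)×n complex matrix B = (β_{ij}) by β_{i1} = −(n+1)/(n·w_i) and, for 2 ≤ j ≤ n, β_{ij} = a_j(w_i) − conj(z_j² · a_j(w_i)), where a_j(w_i) = w_i/(n·(w_i − z_j)²). Then every column sum of B vanishes: Σ_{i=1}^{n−1} β_{ij} = 0 for all 1 ≤ j ≤ n. In particular B is positively singular, i.e., p is inextensible with respect to its zero 0. -/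

import Mathlib

open Complex Polynomial

/-- The critical points `w_i = (1/n)^{1/(n-1)} e^{2πi(i-1)/(n-1)}`, `1 ≤ i ≤ n-1`,
of `p(z) = z^n - z`, indexed by `Fin (n-1)`. -/
noncomputable def wpt (n : ℕ) (i : Fin (n - 1)) : ℂ :=
  ((((1 : ℝ) / n) ^ ((1 : ℝ) / ((n : ℝ) - 1)) : ℝ) : ℂ) *
    Complex.exp (2 * Real.pi * Complex.I * ((i : ℕ) : ℂ) / ((n : ℂ) - 1))

/-- The zeros `z_1 = 0`, `z_j = e^{2πi(j-2)/(n-1)}`, `2 ≤ j ≤ n`,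
of `p(z) = z^n - z`, indexed by `Fin n`. -/
noncomputable def zpt (n : ℕ) (j : Fin n) : ℂ :=
  if (j : ℕ) = 0 then 0
  else Complex.exp (2 * Real.pi * Complex.I * (((j : ℕ) : ℂ) - 1) / ((n : ℂ) - 1))

/-- The coefficient `a_j(w_i) = w_i / (n (w_i - z_j)²)` for `2 ≤ j ≤ n`. -/
noncomputable def acoef (n : ℕ) (i : Fin (n - 1)) (j : Fin n) : ℂ :=
  wpt n i / ((n : ℂ) * (wpt n i - zpt n j) ^ 2)

/-- The `(n-1) × n` matrix `B = (β_{ij})` with `β_{i1} = -(n+1)/(n w_i)` and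
`β_{ij} = a_j(w_i) - conj(z_j² a_j(w_i))` for `2 ≤ j ≤ n`. -/
noncomputable def Bmat (n : ℕ) : Matrix (Fin (n - 1)) (Fin n) ℂ :=
  Matrix.of fun i j =>
    if (j : ℕ) = 0 then -((n : ℂ) + 1) / ((n : ℂ) * wpt n i)
    else acoef n i j - (starRingEnd ℂ) ((zpt n j) ^ 2 * acoef n i j)

/-- A complex `m × k` matrix is positively singular if there exist nonnegative reals
`μ_1, …, μ_m`, not all zero, with `∑ i μ_i m_{ij} = 0` for every column `j`. -/
def PositivelySingular {m k : ℕ} (M : Matrix (Fin m) (Fin k) ℂ) : Prop :=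
  ∃ μ : Fin m → ℝ, (∀ i, 0 ≤ μ i) ∧ (∃ i, μ i ≠ 0) ∧
    ∀ j, ∑ i, (μ i : ℂ) * M i j = 0

/-- Every column sum of `B(z^n - z)` vanishes; in particular `B` is positively singular,
i.e. `z^n - z` is inextensible with respect to its zero `0`. -/
lemma colsum_zero (n : ℕ) (hn : 3 ≤ n) (j : Fin n) :
    ∑ i : Fin (n - 1), Bmat n i j = 0 := by
  set m := n - 1 with hmdef
  have hm2 : 2 ≤ m := by omega
  have hm0 : (m : ℕ) ≠ 0 := by omega
  haveI : NeZero m := ⟨hm0⟩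
  have hmn : (m : ℂ) = (n : ℂ) - 1 := by
    have : ((n - 1 : ℕ) : ℂ) = (n : ℂ) - 1 := by
      push_cast [Nat.cast_sub (by omega : 1 ≤ n)]; ring
    simpa [hmdef] using this
  set ω : ℂ := Complex.exp (2 * Real.pi * Complex.I / m) with hωdef
  have hprim : IsPrimitiveRoot ω m := Complex.isPrimitiveRoot_exp m hm0
  have hω1 : ω ≠ 1 := hprim.ne_one (by omega)
  have hωm : ω ^ m = 1 := hprim.pow_eq_one
  have hω0 : ω ≠ 0 := Complex.exp_ne_zero _
  -- basic facts about r
  set r : ℝ := ((1 : ℝ) / n) ^ ((1 : ℝ) / ((n : ℝ) - 1)) with hrdef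
  have hn1 : (1 : ℝ) < n := by exact_mod_cast by omega
  have hr0 : 0 < r := Real.rpow_pos_of_pos (by positivity) _
  have hr1 : r < 1 := by
    apply Real.rpow_lt_one (by positivity) (by rw [div_lt_one (by positivity)]; exact hn1)
    exact div_pos one_pos (by linarith)
  have hnC : (n : ℂ) ≠ 0 := by exact_mod_cast (by omega : n ≠ 0)
  -- pow mod
  have hpowmod : ∀ a : ℕ, ω ^ (a % m) = ω ^ a := by
    intro a
    conv_rhs => rw [← Nat.mod_add_div a m]
    rw [pow_add, pow_mul, hωm, one_pow, mul_one]
  have hadd : ∀ a b : Fin m, ω ^ ((a + b : Fin m) : ℕ) = ω ^ (a : ℕ) * ω ^ (b : ℕ) := by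
    intro a b
    rw [Fin.add_def]
    simp only [hpowmod, pow_add]
  -- norms
  have hnormpow : ∀ k : ℕ, ‖ω ^ k‖ = 1 := by
    intro k
    have : ‖ω‖ = 1 := by
      rw [hωdef]
      have : 2 * (Real.pi : ℂ) * Complex.I / m = ((2 * Real.pi / m : ℝ) : ℂ) * Complex.I := by
        push_cast; ring
      rw [this, Complex.norm_exp_ofReal_mul_I]
    simp [norm_pow, this]
  have hsub1 : ∀ k : ℕ, (r : ℂ) * ω ^ k - 1 ≠ 0 := by
    intro k h
    have h1 : (r : ℂ) * ω ^ k = 1 := by linear_combination h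
    have := congrArg (‖·‖) h1
    simp [norm_mul, hnormpow, Complex.norm_real, abs_of_pos hr0] at this
    linarith
  -- w in terms of ω
  have hw : ∀ i : Fin m, wpt n i = (r : ℂ) * ω ^ (i : ℕ) := by
    intro i
    rw [wpt, ← hrdef, ← hmn]
    congr 1
    rw [← Complex.exp_nat_mul]
    congr 1
    field_simp
  have hconjω : (starRingEnd ℂ) ω = ω⁻¹ := by
    rw [hωdef, ← Complex.exp_conj, ← Complex.exp_neg]
    congr 1
    simp [map_div₀, Complex.conj_I, map_ofNat]
    ring
  have hconjpow : ∀ k : ℕ, (starRingEnd ℂ) (ω ^ k) = (ω ^ k)⁻¹ := by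
    intro k
    rw [map_pow, hconjω, inv_pow]
  rcases eq_or_ne (j : ℕ) 0 with hj | hj
  · -- first column
    have : ∀ i : Fin m, Bmat n i j =
        (-((n : ℂ) + 1) / ((n : ℂ) * r)) * (ω ^ (m - 1)) ^ (i : ℕ) := by
      intro i
      rw [Bmat, Matrix.of_apply, if_pos hj, hw i]
      have hωiv : ω ^ (m - 1) = (ω)⁻¹ := by
        have h1 : ω * ω ^ (m - 1) = 1 := by
          rw [show ω * ω ^ (m - 1) = ω ^ (1 + (m - 1)) from by rw [pow_add, pow_one],
            show 1 + (m - 1) = m from by omega]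
          exact hωm
        field_simp
        linear_combination h1
      rw [hωiv, inv_pow, mul_comm (-((n : ℂ) + 1) / ((n : ℂ) * (r : ℂ))) _,
        inv_mul_eq_div, div_div]
      congr 1
      ring
    rw [Finset.sum_congr rfl (fun i _ => this i), ← Finset.mul_sum]
    have hη1 : ω ^ (m - 1) ≠ 1 := by
      intro h
      apply hω1
      have h1 : ω * ω ^ (m - 1) = 1 := by
        rw [show ω * ω ^ (m - 1) = ω ^ (1 + (m - 1)) from by rw [pow_add, pow_one],
          show 1 + (m - 1) = m from by omega]
        exact hωm
      rw [h, mul_one] at h1; exact h1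
    have hsum : ∑ i : Fin m, (ω ^ (m - 1)) ^ (i : ℕ) = 0 := by
      rw [Fin.sum_univ_eq_sum_range, geom_sum_eq hη1]
      have : (ω ^ (m - 1)) ^ m = 1 := by
        rw [← pow_mul, mul_comm, pow_mul, hωm, one_pow]
      rw [this]
      simp
    rw [hsum, mul_zero]
  · -- other columns
    have htlt : (j : ℕ) - 1 < m := by omega
    set t : Fin m := ⟨(j : ℕ) - 1, htlt⟩ with htdef
    set ζ : ℂ := ω ^ (t : ℕ) with hζdef
    have hζ0 : ζ ≠ 0 := pow_ne_zero _ hω0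
    have hz : zpt n j = ζ := by
      rw [zpt, if_neg hj, hζdef, ← hmn]
      rw [← Complex.exp_nat_mul]
      congr 1
      have : (((j : ℕ) : ℂ) - 1) = (((j : ℕ) - 1 : ℕ) : ℂ) := by
        push_cast [Nat.cast_sub (by omega : 1 ≤ (j : ℕ))]; ring
      rw [this]
      show 2 * (Real.pi : ℂ) * Complex.I * _ / (m : ℂ) =
        ((t : ℕ) : ℂ) * (2 * (Real.pi : ℂ) * Complex.I / (m : ℂ))
      rw [htdef]
      field_simp
    set g : Fin m → ℂ := fun i => ζ⁻¹ * ((r : ℂ) * ω ^ (i : ℕ) /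
      ((n : ℂ) * ((r : ℂ) * ω ^ (i : ℕ) - 1) ^ 2)) with hgdef
    have hsum1 : ∑ i : Fin m, acoef n i j = ∑ i : Fin m, g i := by
      refine (Fintype.sum_equiv (Equiv.addRight t) g (fun i => acoef n i j) ?_).symm
      intro x
      rw [hgdef]
      simp only [Equiv.coe_addRight]
      rw [acoef, hw, hz, hadd x t, ← hζdef]
      rw [show (r : ℂ) * (ω ^ (x : ℕ) * ζ) - ζ = ζ * ((r : ℂ) * ω ^ (x : ℕ) - 1) from by ring,
        mul_pow]
      have hx := hsub1 (x : ℕ)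
      field_simp
    have hsum2 : ∑ i : Fin m, (starRingEnd ℂ) (ζ ^ 2 * acoef n i j) = ∑ i : Fin m, g i := by
      refine (Fintype.sum_equiv (Equiv.subLeft t) g
        (fun i => (starRingEnd ℂ) (ζ ^ 2 * acoef n i j)) ?_).symm
      intro x
      set u : ℂ := ω ^ (x : ℕ) with hudef
      have hu0 : u ≠ 0 := pow_ne_zero _ hω0
      have hωsub : ω ^ ((Equiv.subLeft t x : Fin m) : ℕ) = ζ * u⁻¹ := by
        have h1 : ω ^ (((t - x) + x : Fin m) : ℕ) = ω ^ ((t - x : Fin m) : ℕ) * u := hadd _ _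
        rw [sub_add_cancel] at h1
        rw [show (Equiv.subLeft t x) = t - x from rfl]
        rw [← hζdef] at h1
        rw [h1, mul_assoc, mul_inv_cancel₀ hu0, mul_one]
      simp only [acoef]
      rw [hw, hz, hωsub]
      simp only [hgdef]
      rw [← hudef]
      have hru : (r : ℂ) * u - 1 ≠ 0 := by rw [hudef]; exact hsub1 _
      have hden : (r : ℂ) * (ζ * u⁻¹) - ζ = ζ * u⁻¹ * ((r : ℂ) - u) := by
        field_simp
      rw [hden]
      -- compute conjugate
      have hconjζ : (starRingEnd ℂ) ζ = ζ⁻¹ := hconjpow _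
      have hconju : (starRingEnd ℂ) u = u⁻¹ := by rw [hudef]; exact hconjpow _
      have hconjuin : (starRingEnd ℂ) u⁻¹ = u := by
        rw [map_inv₀, hconju, inv_inv]
      simp only [map_mul, map_pow, map_div₀, map_sub, map_one, map_natCast,
        Complex.conj_ofReal, hconjζ, hconju, hconjuin]
      rw [show (r : ℂ) - u⁻¹ = u⁻¹ * ((r : ℂ) * u - 1) from by field_simp,
        show ζ⁻¹ * u * (u⁻¹ * ((r : ℂ) * u - 1)) = ζ⁻¹ * ((r : ℂ) * u - 1) from by
          field_simp]
      field_simp [hζ0, hu0, hnC, hru]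
    have hB : ∀ i : Fin m, Bmat n i j = acoef n i j - (starRingEnd ℂ) (ζ ^ 2 * acoef n i j) := by
      intro i
      rw [Bmat, Matrix.of_apply, if_neg hj, hz]
    rw [Finset.sum_congr rfl (fun i _ => hB i), Finset.sum_sub_distrib, hsum1, hsum2, sub_self]

theorem column_sums_vanish_and_positively_singular (n : ℕ) (hn : 3 ≤ n) :
    (∀ j : Fin n, ∑ i : Fin (n - 1), Bmat n i j = 0) ∧ PositivelySingular (Bmat n) := by
  refine ⟨colsum_zero n hn, fun _ => 1, fun _ => zero_le_one, ⟨⟨0, by omega⟩, one_ne_zero⟩, ?_⟩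
  intro j
  simpa using colsum_zero n hn j
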